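/- Every finite normal-form game Γ has at least one correlated optimin: there exists P̄ ∈ Δ(A) such that no Q ∈ Δ(A) satisfies π_i(Q) ≥ π_i(P̄) for every player i with strict inequality for at least one player. -/

import Mathlib

open Finset

variable {I : Type*} [Fintype I] [DecidableEq I] [Nonempty I]
variable {A : I → Type*} [∀ i, Fintype (A i)] [∀ i, DecidableEq (A i)]
  [∀ i, Nonempty (A i)]

/-- The unnormalized gain of player `j` from switching to `b` after receiving
recommendation `r`:  `Σ_{a_{-j}} P(r, a_{-j}) · [u_j(b, a_{-j}) − u_j(r, a_{-j})]`. -/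
noncomputable def gain (u : I → (∀ i, A i) → ℝ) (P : (∀ i, A i) → ℝ)
    (j : I) (r b : A j) : ℝ :=
  ∑ a : ∀ i, A i,
    if a j = r then P a * (u j (Function.update a j b) - u j a) else 0

/-- `δ` is an admissible recommendation-contingent deviation profile for the opponents
of player `i`: each `δ j r` lies in `B_j^P(r) = {r} ∪ {b : gain > 0}`. -/
def Admissible (u : I → (∀ i, A i) → ℝ) (P : (∀ i, A i) → ℝ) (i : I)
    (δ : ∀ j, A j → A j) : Prop :=
  ∀ j, j ≠ i → ∀ r : A j, δ j r = r ∨ 0 < gain u P j r (δ j r)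

/-- The action profile `(a_i, δ_{-i}(a_{-i}))`. -/
def applyDev (i : I) (δ : ∀ j, A j → A j) (a : ∀ j, A j) : ∀ j, A j :=
  fun j => if j = i then a j else δ j (a j)

/-- Correlated optimin performance of player `i` at `P`:
`π_i(P) = min_{δ_{-i} ∈ B_{-i}^P} Σ_a P(a) u_i(a_i, δ_{-i}(a_{-i}))`. -/
noncomputable def perf (u : I → (∀ i, A i) → ℝ) (P : (∀ i, A i) → ℝ) (i : I) : ℝ :=
  sInf {x | ∃ δ : ∀ j, A j → A j, Admissible u P i δ ∧
    x = ∑ a : ∀ j, A j, P a * u i (applyDev i δ a)}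

section Aux

open Filter Topology

/-- The defining set of `perf` is finite. -/
lemma perfSet_finite (u : I → (∀ i, A i) → ℝ) (P : (∀ i, A i) → ℝ) (i : I) :
    Set.Finite {x | ∃ δ : ∀ j, A j → A j, Admissible u P i δ ∧
      x = ∑ a : ∀ j, A j, P a * u i (applyDev i δ a)} := by
  apply Set.Finite.subset
    (Set.finite_range fun δ : ∀ j, A j → A j =>
      ∑ a : ∀ j, A j, P a * u i (applyDev i δ a))
  rintro x ⟨δ, -, rfl⟩
  exact ⟨δ, rfl⟩

/-- The defining set of `perf` is nonempty (the identity deviation is admissible). -/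
lemma perfSet_nonempty (u : I → (∀ i, A i) → ℝ) (P : (∀ i, A i) → ℝ) (i : I) :
    Set.Nonempty {x | ∃ δ : ∀ j, A j → A j, Admissible u P i δ ∧
      x = ∑ a : ∀ j, A j, P a * u i (applyDev i δ a)} :=
  ⟨_, ⟨fun _ r => r, fun _ _ _ => Or.inl rfl, rfl⟩⟩

lemma perf_mem (u : I → (∀ i, A i) → ℝ) (P : (∀ i, A i) → ℝ) (i : I) :
    perf u P i ∈ {x | ∃ δ : ∀ j, A j → A j, Admissible u P i δ ∧
      x = ∑ a : ∀ j, A j, P a * u i (applyDev i δ a)} :=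
  (perfSet_nonempty u P i).csInf_mem (perfSet_finite u P i)

lemma perf_le (u : I → (∀ i, A i) → ℝ) (P : (∀ i, A i) → ℝ) (i : I)
    {δ : ∀ j, A j → A j} (hδ : Admissible u P i δ) :
    perf u P i ≤ ∑ a : ∀ j, A j, P a * u i (applyDev i δ a) :=
  csInf_le (perfSet_finite u P i).bddBelow ⟨δ, hδ, rfl⟩

lemma gain_continuous (u : I → (∀ i, A i) → ℝ) (j : I) (r b : A j) :
    Continuous fun P : (∀ i, A i) → ℝ => gain u P j r b := by
  apply continuous_finset_sum
  intro a _
  by_cases h : a j = r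
  · simp only [h, if_true]
    exact (continuous_apply a).mul continuous_const
  · simp only [h, if_false]
    exact continuous_const

/-- Every function that is "upper semicontinuous" in the eventual sense attains a
maximum on a nonempty compact set. -/
lemma usc_exists_max {X : Type*} [TopologicalSpace X] {s : Set X}
    (hs : IsCompact s) (hne : s.Nonempty) {f : X → ℝ}
    (hf : ∀ (x : X) (y : ℝ), f x < y → ∀ᶠ z in 𝓝 x, f z < y) :
    ∃ x ∈ s, ∀ y ∈ s, f y ≤ f x := by
  by_contra h
  push_neg at h
  have hopen : ∀ c : ℝ, IsOpen {z | f z < c} := by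
    intro c
    rw [isOpen_iff_mem_nhds]
    intro x hx
    exact hf x c hx
  have hcover : s ⊆ ⋃ y : ↥s, {z | f z < f y.1} := by
    intro x hx
    obtain ⟨y, hy, hxy⟩ := h x hx
    exact Set.mem_iUnion.2 ⟨⟨y, hy⟩, hxy⟩
  obtain ⟨t, ht⟩ := hs.elim_finite_subcover (fun y : ↥s => {z | f z < f y.1})
    (fun y => hopen _) hcover
  obtain ⟨x0, hx0⟩ := hne
  have htne : t.Nonempty := by
    rcases Set.mem_iUnion₂.1 (ht hx0) with ⟨i, hi, -⟩
    exact ⟨i, hi⟩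
  obtain ⟨b, hbt, hb⟩ := Finset.exists_max_image t (fun y : ↥s => f y.1) htne
  rcases Set.mem_iUnion₂.1 (ht b.2) with ⟨j, hjt, hj⟩
  exact absurd (hb j hjt) (not_le.2 hj)

/-- `P ↦ ∑ i, perf u P i` is upper semicontinuous. -/
lemma sum_perf_usc (u : I → (∀ i, A i) → ℝ) (P : (∀ i, A i) → ℝ) (y : ℝ)
    (hy : (∑ i : I, perf u P i) < y) :
    ∀ᶠ Q in 𝓝 P, (∑ i : I, perf u Q i) < y := by
  choose δ hadm hval using fun i : I => perf_mem u P i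
  set G : ((∀ i, A i) → ℝ) → ℝ :=
    fun Q => ∑ i : I, ∑ a : ∀ j, A j, Q a * u i (applyDev i (δ i) a) with hG
  have hGcont : Continuous G := by
    apply continuous_finset_sum
    intro i _
    exact continuous_finset_sum _ fun a _ => (continuous_apply a).mul continuous_const
  have hGP : G P = ∑ i : I, perf u P i := by
    simp only [hG]
    exact Finset.sum_congr rfl fun i _ => (hval i).symm
  have E1 : ∀ᶠ Q in 𝓝 P, G Q < y := by
    have : Set.Iio y ∈ 𝓝 (G P) := Iio_mem_nhds (hGP ▸ hy)
    exact (hGcont.tendsto P).eventually this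
  have E2 : ∀ᶠ Q in 𝓝 P, ∀ i : I, Admissible u Q i (δ i) := by
    rw [Filter.eventually_all]
    intro i
    unfold Admissible
    rw [Filter.eventually_all]
    intro j
    by_cases hji : j = i
    · exact Eventually.of_forall fun Q hc => absurd hji hc
    · have : ∀ᶠ Q in 𝓝 P, ∀ r : A j, δ i j r = r ∨ 0 < gain u Q j r (δ i j r) := by
        rw [Filter.eventually_all]
        intro r
        rcases hadm i j hji r with h | h
        · exact Eventually.of_forall fun Q => Or.inl h
        · have : Set.Ioi (0 : ℝ) ∈ 𝓝 (gain u P j r (δ i j r)) := Ioi_mem_nhds h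
          exact (((gain_continuous u j r (δ i j r)).tendsto P).eventually this).mono
            fun Q hQ => Or.inr hQ
      exact this.mono fun Q hQ _ => hQ
  refine (E1.and E2).mono fun Q ⟨h1, h2⟩ => lt_of_le_of_lt ?_ h1
  exact Finset.sum_le_sum fun i _ => perf_le u Q i (h2 i)

end Aux

/-- every finite game has a correlated optimin, i.e. a distribution
`P̄ ∈ Δ(A)` that is Pareto undominated with respect to `(π_1, …, π_n)`. -/
theorem exists_correlated_optimin (u : I → (∀ i, A i) → ℝ) :
    ∃ Pbar ∈ stdSimplex ℝ (∀ i, A i),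
      ¬ ∃ Q ∈ stdSimplex ℝ (∀ i, A i),
        (∀ i : I, perf u Pbar i ≤ perf u Q i) ∧
        (∃ i : I, perf u Pbar i < perf u Q i) := by
  classical
  have hne : (stdSimplex ℝ (∀ i, A i)).Nonempty := by
    inhabit (∀ i, A i)
    refine ⟨fun a => if a = default then 1 else 0, fun a => ?_, ?_⟩
    · dsimp only; split <;> norm_num
    · simp
  obtain ⟨Pbar, hPbar, hmax⟩ := usc_exists_max (isCompact_stdSimplex ℝ _) hne
    (f := fun P => ∑ i : I, perf u P i) (sum_perf_usc u)
  refine ⟨Pbar, hPbar, ?_⟩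
  rintro ⟨Q, hQ, hall, i0, hlt⟩
  have hsum : (∑ i : I, perf u Pbar i) < ∑ i : I, perf u Q i :=
    Finset.sum_lt_sum (fun i _ => hall i) ⟨i0, Finset.mem_univ _, hlt⟩
  exact absurd (hmax Q hQ) (not_le.2 hsum)
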